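/- Let b, d ∈ {1, 2, …, n}. If s ∈ H_1(K_b) has persistence interval (b, d) in H_1(K_•), then its image θ_{1,b}(s) ∈ H_1(K̃_b) has persistence interval (b, d) in H_1(K̃_•). Furthermore, if s has persistence interval (b, ∞) in H_1(K_•), then θ_{1,b}(s) has persistence interval (b, ∞) in H_1(K̃_•). -/

import Mathlib

/-- An abstract simplicial complex on a vertex type `α`: a collection of nonempty
finite subsets of `α` closed under passing to nonempty subsets. -/
structure AbsSC (α : Type) where
  faces : Set (Finset α)
  not_empty_mem : ∅ ∉ faces
  down_closed : ∀ {s t : Finset α}, s ∈ faces → t ⊆ s → t.Nonempty → t ∈ faces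

namespace AbsSC

variable {α : Type}

/-- The vertex set of an abstract simplicial complex. -/
def vertexSet (K : AbsSC α) : Set α := {v | {v} ∈ K.faces}

/-- The type of `q`-simplices (faces with `q+1` vertices). -/
def simplices (K : AbsSC α) (q : ℕ) : Type :=
  {s : Finset α // s ∈ K.faces ∧ s.card = q + 1}

/-- The space of `q`-chains over `ℤ/2`: formal sums of `q`-simplices. -/
abbrev Chain (K : AbsSC α) (q : ℕ) : Type := K.simplices q →₀ ZMod 2

/-- The sum of the `q`-dimensional faces of a `(q+1)`-simplex. -/
noncomputable def faceChain (K : AbsSC α) (q : ℕ) (s : K.simplices (q + 1)) : K.Chain q :=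
  ∑ t ∈ (s.1.powersetCard (q + 1)).attach,
    Finsupp.single
      ⟨t.1, by
        obtain ⟨hsub, hcard⟩ := Finset.mem_powersetCard.mp t.2
        refine ⟨K.down_closed s.2.1 hsub ?_, hcard⟩
        rw [← Finset.card_pos, hcard]
        omega⟩
      (1 : ZMod 2)

/-- The boundary map `∂_{q+1} : C_{q+1}(K) → C_q(K)`, sending each `(q+1)`-simplex to
the sum of its `q`-dimensional faces. -/
noncomputable def boundary (K : AbsSC α) (q : ℕ) :
    K.Chain (q + 1) →ₗ[ZMod 2] K.Chain q :=
  Finsupp.lsum (ZMod 2) fun s => LinearMap.toSpanSingleton (ZMod 2) (K.Chain q) (K.faceChain q s)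

/-- The cycle subspace: `ker ∂_q` (all of `C_0` in degree `0`). -/
noncomputable def cycles (K : AbsSC α) : (q : ℕ) → Submodule (ZMod 2) (K.Chain q)
  | 0 => ⊤
  | q + 1 => LinearMap.ker (K.boundary q)

/-- The boundaries, viewed as a submodule of the cycles. -/
noncomputable def boundariesIn (K : AbsSC α) (q : ℕ) :
    Submodule (ZMod 2) (K.cycles q) :=
  Submodule.comap (K.cycles q).subtype (LinearMap.range (K.boundary q))

/-- The `q`-th simplicial homology over `ℤ/2`: `H_q(K) = ker ∂_q / im ∂_{q+1}`. -/
def Homology (K : AbsSC α) (q : ℕ) : Type :=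
  (K.cycles q) ⧸ (K.boundariesIn q)

noncomputable instance (K : AbsSC α) (q : ℕ) : AddCommGroup (K.Homology q) :=
  inferInstanceAs (AddCommGroup ((K.cycles q) ⧸ (K.boundariesIn q)))

noncomputable instance (K : AbsSC α) (q : ℕ) : Module (ZMod 2) (K.Homology q) :=
  inferInstanceAs (Module (ZMod 2) ((K.cycles q) ⧸ (K.boundariesIn q)))

/-- The homology class of a cycle. -/
noncomputable def hClass (K : AbsSC α) (q : ℕ) (c : K.Chain q) (hc : c ∈ K.cycles q) :
    K.Homology q :=
  Submodule.Quotient.mk ⟨c, hc⟩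

/-- The chain map induced by an inclusion of simplicial complexes. -/
noncomputable def chainMap (K L : AbsSC α) (h : K.faces ⊆ L.faces) (q : ℕ) :
    K.Chain q →ₗ[ZMod 2] L.Chain q :=
  Finsupp.lmapDomain (ZMod 2) (ZMod 2) fun s : K.simplices q =>
    (⟨s.1, h s.2.1, s.2.2⟩ : L.simplices q)

/-- `θ` is the map on `q`-th homology induced by the inclusion `K ⊆ L`: it sends the
class of every cycle `c` of `K` to the class of the image chain of `c` in `L`. -/
def InducedHom (K L : AbsSC α) (q : ℕ)
    (θ : K.Homology q →ₗ[ZMod 2] L.Homology q) : Prop :=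
  ∃ h : K.faces ⊆ L.faces,
    ∀ (c : K.Chain q) (hc : c ∈ K.cycles q),
      ∃ hc' : chainMap K L h q c ∈ L.cycles q,
        θ (K.hClass q c hc) = L.hClass q (chainMap K L h q c) hc'

end AbsSC

/-- The faces of the gluing stars `S = S_1 ⊔ ⋯ ⊔ S_k`: for each `j`, the vertex `{z j}`,
the vertices `{v}` for `v ∈ P j`, and the edges `{z j, v}` for `v ∈ P j`. -/
def starFaces {α : Type} [DecidableEq α] {k : ℕ} (P : Fin k → Set α) (z : Fin k → α) :
    Set (Finset α) :=
  {s | ∃ j : Fin k, s = {z j} ∨ ∃ v ∈ P j, s = {v} ∨ s = {z j, v}}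

section Tower

variable {W : ℕ → Type} [∀ i, AddCommGroup (W i)] [∀ i, Module (ZMod 2) (W i)]

/-- The composite `φ_{i,j} = φ_{j-1} ∘ ⋯ ∘ φ_i` of the connecting maps of a tower
(the identity when `i = j`). -/
noncomputable def comps (φ : ∀ i, W i →ₗ[ZMod 2] W (i + 1)) {i j : ℕ} (h : i ≤ j) :
    W i →ₗ[ZMod 2] W j :=
  Nat.leRecOn (C := fun m => W i →ₗ[ZMod 2] W m) h (fun {m} g => (φ m).comp g) LinearMap.id

/-- `s ∈ W b` has persistence interval `(b, d)` with finite death `d ∈ {b+1, …, n}`: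
`s ∉ im φ_{b-1}`, `φ_{b,d'}(s) ∉ im φ_{b-1,d'}` for all `b ≤ d' < d`, and
`φ_{b,d}(s) ∈ im φ_{b-1,d}`. -/
def HasPersIntervalFin (φ : ∀ i, W i →ₗ[ZMod 2] W (i + 1)) (n b d : ℕ) (s : W b) : Prop :=
  ∃ (_ : 1 ≤ b) (hbd : b < d) (_ : d ≤ n),
    s ∉ LinearMap.range (comps φ (Nat.sub_le b 1)) ∧
    (∀ (d' : ℕ) (hd' : b ≤ d'), d' < d →
      comps φ hd' s ∉ LinearMap.range (comps φ (Nat.le_trans (Nat.sub_le b 1) hd'))) ∧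
    comps φ (Nat.le_of_lt hbd) s ∈
      LinearMap.range (comps φ (Nat.le_trans (Nat.sub_le b 1) (Nat.le_of_lt hbd)))

/-- `s ∈ W b` has persistence interval `(b, ∞)`: `s ∉ im φ_{b-1}` and
`φ_{b,d'}(s) ∉ im φ_{b-1,d'}` for all `b ≤ d' ≤ n`. -/
def HasPersIntervalInf (φ : ∀ i, W i →ₗ[ZMod 2] W (i + 1)) (n b : ℕ) (s : W b) : Prop :=
  ∃ _ : 1 ≤ b,
    s ∉ LinearMap.range (comps φ (Nat.sub_le b 1)) ∧
    ∀ (d' : ℕ) (hd' : b ≤ d'), d' ≤ n →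
      comps φ hd' s ∉ LinearMap.range (comps φ (Nat.le_trans (Nat.sub_le b 1) hd'))

end Tower

namespace AbsSC

variable {α : Type}

/-- The simplex map induced by an inclusion. -/
def sMap (K L : AbsSC α) (h : K.faces ⊆ L.faces) (q : ℕ) (s : K.simplices q) :
    L.simplices q := ⟨s.1, h s.2.1, s.2.2⟩

lemma sMap_injective (K L : AbsSC α) (h : K.faces ⊆ L.faces) (q : ℕ) :
    Function.Injective (sMap K L h q) := by
  intro a b hab
  have h' : (sMap K L h q a).1 = (sMap K L h q b).1 := congrArg Subtype.val hab
  exact Subtype.ext h'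

lemma chainMap_eq (K L : AbsSC α) (h : K.faces ⊆ L.faces) (q : ℕ) (c : K.Chain q) :
    chainMap K L h q c = Finsupp.mapDomain (sMap K L h q) c := rfl

lemma chainMap_injective (K L : AbsSC α) (h : K.faces ⊆ L.faces) (q : ℕ) :
    Function.Injective (chainMap K L h q) :=
  Finsupp.mapDomain_injective (sMap_injective K L h q)

lemma chainMap_comp (K L M : AbsSC α) (h1 : K.faces ⊆ L.faces) (h2 : L.faces ⊆ M.faces)
    (q : ℕ) (c : K.Chain q) :
    chainMap L M h2 q (chainMap K L h1 q c) = chainMap K M (h1.trans h2) q c := by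
  rw [chainMap_eq, chainMap_eq, chainMap_eq, ← Finsupp.mapDomain_comp]
  rfl

lemma chainMap_id (K : AbsSC α) (h : K.faces ⊆ K.faces) (q : ℕ) (c : K.Chain q) :
    chainMap K K h q c = c := by
  rw [chainMap_eq]
  exact Finsupp.mapDomain_id

lemma chainMap_faceChain (K L : AbsSC α) (h : K.faces ⊆ L.faces) (q : ℕ)
    (s : K.simplices (q + 1)) :
    chainMap K L h q (K.faceChain q s) = L.faceChain q (sMap K L h (q + 1) s) := by
  rw [chainMap_eq]
  unfold faceChain
  rw [Finsupp.mapDomain_finset_sum]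
  apply Finset.sum_congr rfl
  intro t _
  exact Finsupp.mapDomain_single

lemma boundary_single (K : AbsSC α) (q : ℕ) (s : K.simplices (q + 1)) (a : ZMod 2) :
    K.boundary q (Finsupp.single s a) = a • K.faceChain q s := by
  unfold boundary
  rw [Finsupp.lsum_single, LinearMap.toSpanSingleton_apply]

lemma chainMap_boundary (K L : AbsSC α) (h : K.faces ⊆ L.faces) (q : ℕ)
    (c : K.Chain (q + 1)) :
    chainMap K L h q (K.boundary q c) = L.boundary q (chainMap K L h (q + 1) c) := by
  induction c using Finsupp.induction_linear with
  | zero => simp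
  | add f g hf hg => rw [map_add, map_add, hf, hg, ← map_add, ← map_add]
  | single s a =>
    rw [boundary_single, map_smul, chainMap_faceChain, chainMap_eq,
      Finsupp.mapDomain_single, boundary_single]

lemma chainMap_mem_cycles (K L : AbsSC α) (h : K.faces ⊆ L.faces) (q : ℕ)
    {c : K.Chain q} (hc : c ∈ K.cycles q) : chainMap K L h q c ∈ L.cycles q := by
  cases q with
  | zero => trivial
  | succ q =>
    have hc0 : K.boundary q c = 0 := hc
    show L.boundary q (chainMap K L h (q + 1) c) = 0
    rw [← chainMap_boundary, hc0, map_zero]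

lemma inducedHom_id (K : AbsSC α) (q : ℕ) : InducedHom K K q LinearMap.id := by
  refine ⟨subset_rfl, fun c hc => ?_⟩
  refine ⟨by rw [chainMap_id]; exact hc, ?_⟩
  simp only [LinearMap.id_apply]
  unfold hClass
  congr 1
  exact Subtype.ext (chainMap_id K _ q c).symm

lemma inducedHom_comp {K L M : AbsSC α} {q : ℕ}
    {f : K.Homology q →ₗ[ZMod 2] L.Homology q} {g : L.Homology q →ₗ[ZMod 2] M.Homology q}
    (hf : InducedHom K L q f) (hg : InducedHom L M q g) :
    InducedHom K M q (g.comp f) := by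
  obtain ⟨h1, hf⟩ := hf
  obtain ⟨h2, hg⟩ := hg
  refine ⟨h1.trans h2, fun c hc => ?_⟩
  obtain ⟨hc1, he1⟩ := hf c hc
  obtain ⟨hc2, he2⟩ := hg _ hc1
  refine ⟨by rw [← chainMap_comp]; exact hc2, ?_⟩
  rw [LinearMap.comp_apply, he1, he2]
  unfold hClass
  congr 1
  exact Subtype.ext (chainMap_comp K L M h1 h2 q c)

end AbsSC
section TowerAux

variable {W W' : ℕ → Type} [∀ i, AddCommGroup (W i)] [∀ i, Module (ZMod 2) (W i)]
  [∀ i, AddCommGroup (W' i)] [∀ i, Module (ZMod 2) (W' i)]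

lemma comps_self (φ : ∀ i, W i →ₗ[ZMod 2] W (i + 1)) {i : ℕ} (h : i ≤ i) :
    comps φ h = LinearMap.id :=
  Nat.leRecOn_self _

lemma comps_succ (φ : ∀ i, W i →ₗ[ZMod 2] W (i + 1)) {i j : ℕ} (h : i ≤ j)
    {h2 : i ≤ j + 1} : comps φ h2 = (φ j).comp (comps φ h) :=
  Nat.leRecOn_succ h _

lemma square_comps (φ : ∀ i, W i →ₗ[ZMod 2] W (i + 1)) (ψ : ∀ i, W' i →ₗ[ZMod 2] W' (i + 1))
    (θ : ∀ i, W i →ₗ[ZMod 2] W' i) (n : ℕ)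
    (hsq : ∀ i, i < n → (θ (i + 1)).comp (φ i) = (ψ i).comp (θ i))
    {i j : ℕ} (h : i ≤ j) (hjn : j ≤ n) :
    (θ j).comp (comps φ h) = (comps ψ h).comp (θ i) := by
  induction j, h using Nat.le_induction with
  | base => rw [comps_self, comps_self, LinearMap.comp_id, LinearMap.id_comp]
  | succ m hm ih =>
    rw [comps_succ φ hm, comps_succ ψ hm, ← LinearMap.comp_assoc,
      hsq m (by omega), LinearMap.comp_assoc, ih (by omega), ← LinearMap.comp_assoc]

end TowerAux

namespace AbsSC

variable {α : Type}

lemma inducedHom_comps (M : ℕ → AbsSC α) (n : ℕ)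
    (φ : ∀ i, (M i).Homology 1 →ₗ[ZMod 2] (M (i + 1)).Homology 1)
    (hφ : ∀ i, i < n → InducedHom (M i) (M (i + 1)) 1 (φ i))
    {i j : ℕ} (h : i ≤ j) (hjn : j ≤ n) :
    InducedHom (M i) (M j) 1 (comps φ h) := by
  induction j, h using Nat.le_induction with
  | base => rw [comps_self]; exact inducedHom_id _ _
  | succ m hm ih =>
    rw [comps_succ φ hm]
    exact inducedHom_comp (ih (by omega)) (hφ m (by omega))

end AbsSC
namespace AbsSC

variable {α : Type}

lemma chainKey [DecidableEq α] {k : ℕ} (P : Fin k → Set α) (z : Fin k → α)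
    (Kp Kq Ktp Ktq : AbsSC α)
    (hpq : Kp.faces ⊆ Kq.faces) (htpq : Ktp.faces ⊆ Ktq.faces)
    (hKp : Kp.faces ⊆ Ktp.faces) (hKq : Kq.faces ⊆ Ktq.faces)
    (hq : Ktq.faces = Kq.faces ∪ starFaces P z)
    (hz : ∀ j, z j ∉ Kq.vertexSet)
    (hp2 : ∀ s ∈ Ktp.faces, s ∉ starFaces P z → s ∈ Kp.faces)
    (c : Kq.Chain 1) (hc : c ∈ Kq.cycles 1)
    (c' : Ktp.Chain 1) (hc' : c' ∈ Ktp.cycles 1)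
    (B : Ktq.Chain 2)
    (heq : chainMap Kq Ktq hKq 1 c - chainMap Ktp Ktq htpq 1 c' = Ktq.boundary 1 B) :
    ∃ (c'' : Kp.Chain 1) (_ : c'' ∈ Kp.cycles 1) (B' : Kq.Chain 2),
      c - chainMap Kp Kq hpq 1 c'' = Kq.boundary 1 B' := by
  classical
  -- every 2-simplex of Ktq comes from Kq
  have h2q : ∀ t : Ktq.simplices 2, t.1 ∈ Kq.faces := by
    rintro ⟨s, hs, hcard⟩
    rw [hq] at hs
    rcases hs with h | ⟨j, h | ⟨v, _, h | h⟩⟩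
    · exact h
    · exfalso; rw [h] at hcard; simp at hcard
    · exfalso; rw [h] at hcard; simp at hcard
    · exfalso
      rw [h] at hcard
      have : ({z j, v} : Finset α).card ≤ 2 := by
        apply le_trans (Finset.card_insert_le _ _); simp
      omega
  -- pull B back to Kq
  set f2 := sMap Kq Ktq hKq 2 with hf2
  have hinj2 := sMap_injective Kq Ktq hKq 2
  set B' := Finsupp.comapDomain f2 B hinj2.injOn with hB'def
  have hB : Finsupp.mapDomain f2 B' = B := by
    apply Finsupp.mapDomain_comapDomain f2 hinj2
    intro t _
    exact ⟨⟨t.1, h2q t, t.2.2⟩, Subtype.ext rfl⟩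
  set D := Kq.boundary 1 B' with hDdef
  have hBd : Ktq.boundary 1 B = chainMap Kq Ktq hKq 1 D := by
    rw [hDdef, chainMap_boundary, chainMap_eq, hB]
  have h3 : chainMap Ktp Ktq htpq 1 c' = chainMap Kq Ktq hKq 1 (c - D) := by
    rw [map_sub, ← hBd, ← heq]; abel
  -- support of c' lies in Kp
  have hsupp : ∀ t ∈ c'.support, t.1 ∈ Kp.faces := by
    intro t ht
    by_contra hnot
    have hstar : t.1 ∈ starFaces P z := by
      by_contra h'
      exact hnot (hp2 _ t.2.1 h')
    have hne : t.1 ∉ Kq.faces := by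
      intro hmem
      rcases hstar with ⟨j, h | ⟨v, _, h | h⟩⟩
      · have := t.2.2; rw [h] at this; simp at this
      · have := t.2.2; rw [h] at this; simp at this
      · apply hz j
        show ({z j} : Finset α) ∈ Kq.faces
        apply Kq.down_closed hmem
        · rw [h]; intro x hx; simp at hx; subst hx; simp
        · exact ⟨z j, Finset.mem_singleton_self _⟩
    have hv1 : chainMap Ktp Ktq htpq 1 c' (sMap Ktp Ktq htpq 1 t) = c' t := by
      rw [chainMap_eq]
      exact Finsupp.mapDomain_apply (sMap_injective _ _ _ _) c' t
    have hv2 : chainMap Kq Ktq hKq 1 (c - D) (sMap Ktp Ktq htpq 1 t) = 0 := by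
      rw [chainMap_eq]
      apply Finsupp.mapDomain_notin_range
      rintro ⟨u, hu⟩
      apply hne
      have : u.1 = t.1 := congrArg Subtype.val hu
      rw [← this]; exact u.2.1
    rw [h3, hv2] at hv1
    exact Finsupp.mem_support_iff.mp ht hv1.symm
  -- pull c' back to Kp
  set g := sMap Kp Ktp hKp 1 with hgdef
  have hinjg := sMap_injective Kp Ktp hKp 1
  set c'' := Finsupp.comapDomain g c' hinjg.injOn with hc''def
  have hC : Finsupp.mapDomain g c'' = c' := by
    apply Finsupp.mapDomain_comapDomain g hinjg
    intro t ht
    exact ⟨⟨t.1, hsupp t ht, t.2.2⟩, Subtype.ext rfl⟩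
  have hcyc : c'' ∈ Kp.cycles 1 := by
    show Kp.boundary 0 c'' = 0
    apply chainMap_injective Kp Ktp hKp 0
    rw [chainMap_boundary, map_zero, chainMap_eq, hC]
    exact hc'
  refine ⟨c'', hcyc, B', ?_⟩
  apply chainMap_injective Kq Ktq hKq 1
  rw [map_sub, chainMap_comp, ← hBd, ← heq]
  have : chainMap Kp Ktq (hpq.trans hKq) 1 c'' = chainMap Ktp Ktq htpq 1 c' := by
    rw [← hC, ← chainMap_eq, chainMap_comp]
  rw [this]

end AbsSC
/-- for `b, d ∈ {1, …, n}`, if `s ∈ H_1(K_b)` has persistence interval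
`(b, d)` in `H_1(K_•)`, then `θ_{1,b}(s) ∈ H_1(K̃_b)` has persistence interval `(b, d)`
in `H_1(K̃_•)`; and if `s` has persistence interval `(b, ∞)` in `H_1(K_•)`, then
`θ_{1,b}(s)` has persistence interval `(b, ∞)` in `H_1(K̃_•)`. -/
theorem stmt13 {α : Type} [DecidableEq α] (n k : ℕ)
    (K Kt : ℕ → AbsSC α)
    (hK0 : (K 0).faces = ∅)
    (hKt0 : (Kt 0).faces = ∅)
    (hKmono : ∀ i, i < n → (K i).faces ⊆ (K (i + 1)).faces)
    (hKtmono : ∀ i, i < n → (Kt i).faces ⊆ (Kt (i + 1)).faces)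
    (P : Fin k → Set α)
    (hPne : ∀ j, (P j).Nonempty)
    (hPdisj : Pairwise (Function.onFun Disjoint P))
    (hPunion : (⋃ j, P j) = (K 1).vertexSet)
    (z : Fin k → α)
    (hzinj : Function.Injective z)
    (hznew : ∀ (j : Fin k) (i : ℕ), i ≤ n → z j ∉ (K i).vertexSet)
    (hKt : ∀ i, 1 ≤ i → i ≤ n → (Kt i).faces = (K i).faces ∪ starFaces P z)
    (φ : ∀ i : ℕ, (K i).Homology 1 →ₗ[ZMod 2] (K (i + 1)).Homology 1)
    (ψ : ∀ i : ℕ, (Kt i).Homology 1 →ₗ[ZMod 2] (Kt (i + 1)).Homology 1)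
    (θ : ∀ i : ℕ, (K i).Homology 1 →ₗ[ZMod 2] (Kt i).Homology 1)
    (hφ : ∀ i, i < n → AbsSC.InducedHom (K i) (K (i + 1)) 1 (φ i))
    (hψ : ∀ i, i < n → AbsSC.InducedHom (Kt i) (Kt (i + 1)) 1 (ψ i))
    (hθ : ∀ i, i ≤ n → AbsSC.InducedHom (K i) (Kt i) 1 (θ i))
    (hsq : ∀ i, i < n → (θ (i + 1)).comp (φ i) = (ψ i).comp (θ i))
    (b d : ℕ) (hb1 : 1 ≤ b) (hbn : b ≤ n) (hd1 : 1 ≤ d) (hdn : d ≤ n)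
    (s : (K b).Homology 1) :
    (HasPersIntervalFin φ n b d s → HasPersIntervalFin ψ n b d (θ b s)) ∧
    (HasPersIntervalInf φ n b s → HasPersIntervalInf ψ n b (θ b s)) := by
    classical
  have hKsub : ∀ {i j : ℕ}, i ≤ j → j ≤ n → (K i).faces ⊆ (K j).faces := by
    intro i j hij
    induction j, hij using Nat.le_induction with
    | base => intro _; exact subset_rfl
    | succ m hm ih =>
      intro hmn
      exact (ih (by omega)).trans (hKmono m (by omega))
  have hKKt : ∀ i, i ≤ n → (K i).faces ⊆ (Kt i).faces := by
    intro i hin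
    rcases Nat.eq_zero_or_pos i with rfl | hi
    · rw [hK0]; exact Set.empty_subset _
    · rw [hKt i hi hin]; exact Set.subset_union_left
  have hp2 : ∀ p, p ≤ n → ∀ s ∈ (Kt p).faces, s ∉ starFaces P z → s ∈ (K p).faces := by
    intro p hpn s hs hns
    rcases Nat.eq_zero_or_pos p with rfl | hp
    · rw [hKt0] at hs; exact absurd hs (Set.notMem_empty s)
    · rw [hKt p hp hpn] at hs
      rcases hs with h | h
      · exact h
      · exact absurd h hns
  have hsq' : ∀ {i j : ℕ} (h : i ≤ j), j ≤ n →
      ∀ x : (K i).Homology 1, θ j (comps φ h x) = comps ψ h (θ i x) := by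
    intro i j h hjn x
    exact LinearMap.congr_fun (square_comps φ ψ θ n hsq h hjn) x
  have key : ∀ (p q : ℕ) (hpq : p ≤ q), 1 ≤ q → q ≤ n → ∀ x : (K q).Homology 1,
      θ q x ∈ LinearMap.range (comps ψ hpq) → x ∈ LinearMap.range (comps φ hpq) := by
    intro p q hpq hq1 hqn x hx
    obtain ⟨t, ht⟩ := hx
    obtain ⟨hsubφ, hφpt⟩ := AbsSC.inducedHom_comps K n φ hφ hpq hqn
    obtain ⟨hsubψ, hψpt⟩ := AbsSC.inducedHom_comps Kt n ψ hψ hpq hqn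
    obtain ⟨hsubθ, hθpt⟩ := hθ q hqn
    obtain ⟨⟨c, hc⟩, rfl⟩ := Submodule.Quotient.mk_surjective _ x
    obtain ⟨⟨c', hc'⟩, rfl⟩ := Submodule.Quotient.mk_surjective _ t
    obtain ⟨hcm, hem⟩ := hθpt c hc
    obtain ⟨hcm', hem'⟩ := hψpt c' hc'
    have ht2 : (Kt q).hClass 1 (AbsSC.chainMap (Kt p) (Kt q) hsubψ 1 c') hcm' =
        (Kt q).hClass 1 (AbsSC.chainMap (K q) (Kt q) hsubθ 1 c) hcm := by
      rw [← hem', ← hem]; exact ht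
    have hmem := (Submodule.Quotient.eq _).mp ht2
    obtain ⟨B, hB⟩ := hmem
    have hB' : (Kt q).boundary 1 (-B) =
        AbsSC.chainMap (K q) (Kt q) hsubθ 1 c - AbsSC.chainMap (Kt p) (Kt q) hsubψ 1 c' := by
      rw [map_neg, hB, map_sub, neg_sub]
      rfl
    obtain ⟨c'', hcyc, B', hfin⟩ := AbsSC.chainKey P z (K p) (K q) (Kt p) (Kt q)
      hsubφ hsubψ (hKKt p (le_trans hpq hqn)) hsubθ (hKt q hq1 hqn)
      (fun j => hznew j q hqn) (hp2 p (le_trans hpq hqn)) c hc c' hc' (-B) hB'.symm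
    obtain ⟨hcmKq, hφeq⟩ := hφpt c'' hcyc
    refine ⟨(K p).hClass 1 c'' hcyc, ?_⟩
    rw [hφeq]
    apply (Submodule.Quotient.eq _).mpr
    refine ⟨-B', ?_⟩
    show (K q).boundary 1 (-B') = _
    rw [map_neg, ← hfin, map_sub, neg_sub]
    rfl
  constructor
  · rintro ⟨hb1', hbd, hdn', h1, h2, h3⟩
    refine ⟨hb1', hbd, hdn', ?_, ?_, ?_⟩
    · intro hmem
      exact h1 (key (b - 1) b (Nat.sub_le b 1) hb1 hbn s hmem)
    · intro d' hd' hd'd hmem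
      apply h2 d' hd' hd'd
      apply key (b - 1) d' (Nat.le_trans (Nat.sub_le b 1) hd') (le_trans hb1 hd')
        (le_trans (le_of_lt hd'd) hdn)
      rw [← hsq' hd' (le_trans (le_of_lt hd'd) hdn) s] at hmem
      exact hmem
    · obtain ⟨u, hu⟩ := h3
      refine ⟨θ (b - 1) u, ?_⟩
      rw [← hsq' (Nat.le_trans (Nat.sub_le b 1) (Nat.le_of_lt hbd)) hdn u, hu,
        hsq' (Nat.le_of_lt hbd) hdn s]
  · rintro ⟨hb1', h1, h2⟩
    refine ⟨hb1', ?_, ?_⟩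
    · intro hmem
      exact h1 (key (b - 1) b (Nat.sub_le b 1) hb1 hbn s hmem)
    · intro d' hd' hd'n hmem
      apply h2 d' hd' hd'n
      apply key (b - 1) d' (Nat.le_trans (Nat.sub_le b 1) hd') (le_trans hb1 hd') hd'n
      rw [← hsq' hd' hd'n s] at hmem
      exact hmem
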